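/- Fix n ≥ 0 and nonempty subsets S ⊆ T ⊆ {0,…,n} with min S = min T. Let 𝔏 denote the poset (ordered by inclusion of chains) of finite chains 𝒞 of subsets, totally ordered by inclusion, with S, T ∈ 𝒞 and S ⊆ V ⊆ T for every V ∈ 𝒞; let 𝔅 ⊆ 𝔏 consist of those chains all of whose members other than S and T are of the form [T,s] := { r ∈ T : r ≤ s } for some s ∈ T. Let 𝒪 denote the poset of subsets U ⊆ T with min U = max S and max U = max T, ordered by inclusion. Define ξ : 𝔏 → 𝒪 by ξ(𝒞) = { max V : V ∈ 𝒞 }, and γ : 𝒪 → 𝔅 by sending U = { max S = u₀ < u₁ < ⋯ < u_m = max T } to the chain {S} ∪ { [T, u_ℓ] : 1 ≤ ℓ ≤ m−1 } ∪ {T}. Then ξ and γ are well defined and monotone, ξ(γ(U)) = U for every U ∈ 𝒪, and for every 𝒞 ∈ 𝔅 one has γ(ξ(𝒞)) ⊆ 𝒞 with 𝒞 ∖ γ(ξ(𝒞)) ⊆ { [T, max S] }. In particular γ∘ξ ≤ id on 𝔅, so ξ restricted to 𝔅 and γ form an order-theoretic homotopy equivalence between 𝔅 and 𝒪. -/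
import Mathlib


/-- C is a chain (under inclusion) of subsets between S and T containing both
endpoints: an object of the poset 𝔏. -/
def memLc (S T : Finset ℕ) (C : Finset (Finset ℕ)) : Prop :=
  S ∈ C ∧ T ∈ C ∧ (∀ V ∈ C, S ⊆ V ∧ V ⊆ T) ∧
    ∀ V ∈ C, ∀ W ∈ C, V ⊆ W ∨ W ⊆ V

/-- C belongs to 𝔅: all members other than S and T are of the form
[T,s] = { r ∈ T : r ≤ s } for some s ∈ T. -/
def memBc (S T : Finset ℕ) (C : Finset (Finset ℕ)) : Prop :=
  memLc S T C ∧ ∀ V ∈ C, V ≠ S → V ≠ T → ∃ s ∈ T, V = T.filter (· ≤ s)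

/-- U belongs to the poset 𝒪: U ⊆ T with min U = max S and max U = max T. -/
def memO (S T U : Finset ℕ) : Prop :=
  U ⊆ T ∧ S.sup id ∈ U ∧ (∀ x ∈ U, S.sup id ≤ x) ∧ T.sup id ∈ U ∧
    ∀ x ∈ U, x ≤ T.sup id

/-- ξ(𝒞) = { max V : V ∈ 𝒞 }. -/
def xiMap (C : Finset (Finset ℕ)) : Finset ℕ := C.image fun V => V.sup id

/-- γ(U) = {S} ∪ { [T,u] : u ∈ U, u ≠ max S, u ≠ max T } ∪ {T}. -/
def gammaMap (S T U : Finset ℕ) : Finset (Finset ℕ) :=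
  insert S (insert T
    ((U.filter fun u => u ≠ S.sup id ∧ u ≠ T.sup id).image
      fun u => T.filter (· ≤ u)))

lemma sup_id_mem {V : Finset ℕ} (h : V.Nonempty) : V.sup id ∈ V := by
  have := V.max'_mem h
  rwa [Finset.max'_eq_sup', Finset.sup'_eq_sup] at this

lemma sup_filter_le {T : Finset ℕ} {u : ℕ} (hu : u ∈ T) :
    (T.filter (· ≤ u)).sup id = u :=
  le_antisymm (Finset.sup_le fun x hx => (Finset.mem_filter.mp hx).2)
    (Finset.le_sup (f := id) (Finset.mem_filter.mpr ⟨hu, le_refl u⟩))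

lemma mem_gammaMap {S T U V : Finset ℕ} :
    V ∈ gammaMap S T U ↔ V = S ∨ V = T ∨
      ∃ u, (u ∈ U ∧ u ≠ S.sup id ∧ u ≠ T.sup id) ∧ T.filter (· ≤ u) = V := by
  simp only [gammaMap, Finset.mem_insert, Finset.mem_image, Finset.mem_filter]

/-- ξ and γ are well-defined monotone maps, ξ ∘ γ = id on 𝒪,
and γ(ξ(𝒞)) ⊆ 𝒞 with 𝒞 ∖ γ(ξ(𝒞)) ⊆ {[T, max S]} for 𝒞 ∈ 𝔅; hence ξ|𝔅 and γ
form an order-theoretic homotopy equivalence between 𝔅 and 𝒪. -/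
theorem stmt_11 (n : ℕ) (S T : Finset ℕ) (hS : S.Nonempty) (hST : S ⊆ T)
    (hTn : T ⊆ Finset.range (n + 1)) (hmin : ∀ x ∈ T, S.min' hS ≤ x) :
    (∀ C, memLc S T C → memO S T (xiMap C)) ∧
    (∀ C C' : Finset (Finset ℕ), C ⊆ C' → xiMap C ⊆ xiMap C') ∧
    (∀ U, memO S T U → memBc S T (gammaMap S T U)) ∧
    (∀ U U', memO S T U → memO S T U' → U ⊆ U' →
      gammaMap S T U ⊆ gammaMap S T U') ∧
    (∀ U, memO S T U → xiMap (gammaMap S T U) = U) ∧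
    (∀ C, memBc S T C →
      gammaMap S T (xiMap C) ⊆ C ∧
      C \ gammaMap S T (xiMap C) ⊆ {T.filter (· ≤ S.sup id)}) := by
  have hkeyC : ∀ C : Finset (Finset ℕ), memBc S T C →
      ∀ V ∈ C, V ≠ S → V ≠ T → T.filter (· ≤ V.sup id) = V := by
    intro C hC V hV h1 h2
    obtain ⟨s, hsT, rfl⟩ := hC.2 V hV h1 h2
    rw [sup_filter_le hsT]
  refine ⟨?_, ?_, ?_, ?_, ?_, ?_⟩
  · -- ξ well defined
    rintro C ⟨hSC, hTC, hbet, -⟩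
    refine ⟨?_, ?_, ?_, ?_, ?_⟩
    · intro x hx
      obtain ⟨V, hV, rfl⟩ := Finset.mem_image.mp hx
      exact (hbet V hV).2 (sup_id_mem (hS.mono (hbet V hV).1))
    · exact Finset.mem_image_of_mem _ hSC
    · intro x hx
      obtain ⟨V, hV, rfl⟩ := Finset.mem_image.mp hx
      exact Finset.sup_mono (hbet V hV).1
    · exact Finset.mem_image_of_mem _ hTC
    · intro x hx
      obtain ⟨V, hV, rfl⟩ := Finset.mem_image.mp hx
      exact Finset.sup_mono (hbet V hV).2
  · -- ξ monotone
    intro C C' h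
    exact Finset.image_subset_image h
  · -- γ well defined
    rintro U ⟨hUT, haU, hale, hbU, hleb⟩
    have hsub : ∀ V ∈ gammaMap S T U, S ⊆ V ∧ V ⊆ T := by
      intro V hV
      rcases mem_gammaMap.mp hV with rfl | rfl | ⟨u, ⟨hu, -, -⟩, rfl⟩
      · exact ⟨Finset.Subset.refl _, hST⟩
      · exact ⟨hST, Finset.Subset.refl _⟩
      · refine ⟨fun x hx => Finset.mem_filter.mpr
          ⟨hST hx, le_trans (Finset.le_sup (f := id) hx) (hale u hu)⟩,
          Finset.filter_subset _ _⟩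
    refine ⟨⟨Finset.mem_insert_self _ _,
      Finset.mem_insert_of_mem (Finset.mem_insert_self _ _), hsub, ?_⟩, ?_⟩
    · intro V hV W hW
      rcases mem_gammaMap.mp hV with rfl | rfl | ⟨u, ⟨hu, -, -⟩, rfl⟩
      · exact Or.inl (hsub W hW).1
      · exact Or.inr (hsub W hW).2
      · rcases mem_gammaMap.mp hW with rfl | rfl | ⟨v, ⟨hv, -, -⟩, rfl⟩
        · exact Or.inr (hsub _ hV).1
        · exact Or.inl (hsub _ hV).2
        · rcases le_total u v with h | h
          · exact Or.inl fun x hx => Finset.mem_filter.mpr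
              ⟨(Finset.mem_filter.mp hx).1, le_trans (Finset.mem_filter.mp hx).2 h⟩
          · exact Or.inr fun x hx => Finset.mem_filter.mpr
              ⟨(Finset.mem_filter.mp hx).1, le_trans (Finset.mem_filter.mp hx).2 h⟩
    · intro V hV h1 h2
      rcases mem_gammaMap.mp hV with rfl | rfl | ⟨u, ⟨hu, -, -⟩, rfl⟩
      · exact absurd rfl h1
      · exact absurd rfl h2
      · exact ⟨u, hUT hu, rfl⟩
  · -- γ monotone
    intro U U' _ _ hUU'
    exact Finset.insert_subset_insert _ (Finset.insert_subset_insert _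
      (Finset.image_subset_image (Finset.filter_subset_filter _ hUU')))
  · -- ξ ∘ γ = id
    rintro U ⟨hUT, haU, hale, hbU, hleb⟩
    apply Finset.Subset.antisymm
    · intro x hx
      obtain ⟨V, hV, rfl⟩ := Finset.mem_image.mp hx
      rcases mem_gammaMap.mp hV with rfl | rfl | ⟨u, ⟨hu, -, -⟩, rfl⟩
      · exact haU
      · exact hbU
      · rwa [sup_filter_le (hUT hu)]
    · intro u hu
      by_cases h1 : u = S.sup id
      · subst h1; exact Finset.mem_image_of_mem _ (mem_gammaMap.mpr (Or.inl rfl))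
      by_cases h2 : u = T.sup id
      · subst h2
        exact Finset.mem_image_of_mem _ (mem_gammaMap.mpr (Or.inr (Or.inl rfl)))
      · have : T.filter (· ≤ u) ∈ gammaMap S T U :=
          mem_gammaMap.mpr (Or.inr (Or.inr ⟨u, ⟨hu, h1, h2⟩, rfl⟩))
        have := Finset.mem_image_of_mem (fun V => V.sup id) this
        simpa [xiMap, sup_filter_le (hUT hu)] using this
  · -- homotopy
    intro C hC
    obtain ⟨⟨hSC, hTC, hbet, hchain⟩, hform⟩ := hC
    constructor
    · intro V hV
      rcases mem_gammaMap.mp hV with rfl | rfl | ⟨u, ⟨hu, h1, h2⟩, rfl⟩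
      · exact hSC
      · exact hTC
      · obtain ⟨W, hW, rfl⟩ := Finset.mem_image.mp hu
        have hWS : W ≠ S := fun h => h1 (by rw [h])
        have hWT : W ≠ T := fun h => h2 (by rw [h])
        rw [hkeyC C ⟨⟨hSC, hTC, hbet, hchain⟩, hform⟩ W hW hWS hWT]
        exact hW
    · intro V hV
      obtain ⟨hVC, hVg⟩ := Finset.mem_sdiff.mp hV
      have h1 : V ≠ S := fun h => hVg (mem_gammaMap.mpr (Or.inl h))
      have h2 : V ≠ T := fun h => hVg (mem_gammaMap.mpr (Or.inr (Or.inl h)))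
      have hkey := hkeyC C ⟨⟨hSC, hTC, hbet, hchain⟩, hform⟩ V hVC h1 h2
      have hsup : V.sup id ∈ xiMap C := Finset.mem_image_of_mem _ hVC
      have hsb : V.sup id ≠ T.sup id := by
        intro h
        apply h2
        rw [← hkey, h]
        exact Finset.filter_true_of_mem fun x hx => Finset.le_sup (f := id) hx
      have hsa : V.sup id = S.sup id := by
        by_contra hne
        exact hVg (mem_gammaMap.mpr (Or.inr (Or.inr ⟨V.sup id, ⟨hsup, hne, hsb⟩, hkey⟩)))
      rw [Finset.mem_singleton, ← hkey, hsa]
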